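/- Assume every root of the characteristic polynomial f has modulus strictly less than 1, and let κ = max_{1≤j≤p} |λ_j| < 1. Then for every t ≥ p, 1 ≤ σ_t² ≤ σ_{t+1}² ≤ Σ_{j=0}^{∞} (j+1)^{2p} κ^{2j} < +∞; in particular the limit σ_∞² = lim_{t→∞} σ_t² exists and lies in [1, +∞). -/

import Mathlib

open MeasureTheory Filter Real

/-- The inner sum Σ_{(k₁,…,k_p)∈ℕ₀^p, k₁+⋯+k_p=s} λ₁^{k₁}⋯λ_p^{k_p}. -/
noncomputable def hSum (p : ℕ) (lam : Fin p → ℂ) (s : ℕ) : ℂ :=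
  ∑ k ∈ Finset.Nat.antidiagonalTuple p s, ∏ j, lam j ^ k j

/-- σ_t² = Σ_{s=0}^{t−p} ( Σ_{k₁+⋯+k_p=s} λ₁^{k₁}⋯λ_p^{k_p} )², a real number
(each inner sum is a real number since the φ_i are real, so its square equals
the square of its modulus). -/
noncomputable def sigmaSq (p : ℕ) (lam : Fin p → ℂ) (t : ℕ) : ℝ :=
  ∑ s ∈ Finset.range (t - p + 1), ‖hSum p lam s‖ ^ 2

/-- Assume every root of f(λ) = λ^p − φ₁λ^{p−1} − ⋯ − φ_p has modulus < 1, and let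
κ = max_j |λ_j| < 1.  Then for every t ≥ p,
1 ≤ σ_t² ≤ σ_{t+1}² ≤ Σ_{j=0}^∞ (j+1)^{2p} κ^{2j} < +∞;
in particular σ_∞² = lim_t σ_t² exists and lies in [1,∞). -/
theorem sigmaSq_bounds_and_limit (p : ℕ) (hp : 0 < p) (φ : Fin p → ℝ)
    (hφ : φ ⟨p - 1, by omega⟩ ≠ 0) (lam : Fin p → ℂ)
    (hroots : ∀ z : ℂ,
      z ^ p - ∑ i : Fin p, (φ i : ℂ) * z ^ (p - 1 - i.val) = ∏ j, (z - lam j))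
    (hH : ∀ j, ‖lam j‖ < 1)
    (κ : ℝ) (hκub : ∀ j, ‖lam j‖ ≤ κ) (hκmax : ∃ j, ‖lam j‖ = κ) :
    (∀ t, p ≤ t →
      1 ≤ sigmaSq p lam t ∧ sigmaSq p lam t ≤ sigmaSq p lam (t + 1) ∧
        sigmaSq p lam (t + 1) ≤ ∑' j : ℕ, ((j : ℝ) + 1) ^ (2 * p) * κ ^ (2 * j)) ∧
    Summable (fun j : ℕ => ((j : ℝ) + 1) ^ (2 * p) * κ ^ (2 * j)) ∧
    ∃ σinf : ℝ, 1 ≤ σinf ∧ Tendsto (fun t => sigmaSq p lam t) atTop (nhds σinf) := by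
  have hκ0 : 0 ≤ κ := by
    obtain ⟨j, hj⟩ := hκmax; rw [← hj]; exact norm_nonneg _
  have hκ1 : κ < 1 := by
    obtain ⟨j, hj⟩ := hκmax; rw [← hj]; exact hH j
  set f : ℕ → ℝ := fun j : ℕ => ((j : ℝ) + 1) ^ (2 * p) * κ ^ (2 * j) with hf
  have hr1 : ‖κ ^ 2‖ < 1 := by
    rw [Real.norm_eq_abs, abs_of_nonneg (sq_nonneg κ)]; nlinarith
  -- bound on the modulus of hSum
  have habs : ∀ s : ℕ, ‖hSum p lam s‖ ≤ ((s : ℝ) + 1) ^ p * κ ^ s := by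
    intro s
    have hcard : ((Finset.Nat.antidiagonalTuple p s).card : ℝ) ≤ ((s : ℝ) + 1) ^ p := by
      have hsub : Finset.Nat.antidiagonalTuple p s ⊆
          Fintype.piFinset (fun _ : Fin p => Finset.range (s + 1)) := by
        intro k hk
        rw [Finset.Nat.mem_antidiagonalTuple] at hk
        rw [Fintype.mem_piFinset]
        intro j
        rw [Finset.mem_range]
        have : k j ≤ s := hk ▸ Finset.single_le_sum (fun i _ => Nat.zero_le _)
          (Finset.mem_univ j)
        omega
      have := Finset.card_le_card hsub
      rw [Fintype.card_piFinset] at this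
      simp only [Finset.card_range, Finset.prod_const, Finset.card_univ,
        Fintype.card_fin] at this
      calc ((Finset.Nat.antidiagonalTuple p s).card : ℝ) ≤ ((s + 1) ^ p : ℕ) := by
            exact_mod_cast this
        _ = ((s : ℝ) + 1) ^ p := by push_cast; ring
    have h1 : ‖hSum p lam s‖ ≤
        ∑ _k ∈ Finset.Nat.antidiagonalTuple p s, κ ^ s := by
      refine (norm_sum_le _ _).trans (Finset.sum_le_sum ?_)
      intro k hk
      rw [Finset.Nat.mem_antidiagonalTuple] at hk
      rw [norm_prod]
      calc ∏ j, ‖lam j ^ k j‖ = ∏ j, ‖lam j‖ ^ k j := by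
            simp [norm_pow]
        _ ≤ ∏ j, κ ^ k j := Finset.prod_le_prod
            (fun j _ => pow_nonneg (norm_nonneg _) _)
            (fun j _ => pow_le_pow_left₀ (norm_nonneg _) (hκub j) _)
        _ = κ ^ ∑ j, k j := Finset.prod_pow_eq_pow_sum _ _ _
        _ = κ ^ s := by rw [hk]
    calc ‖hSum p lam s‖ ≤
        ∑ _k ∈ Finset.Nat.antidiagonalTuple p s, κ ^ s := h1
      _ = ((Finset.Nat.antidiagonalTuple p s).card : ℝ) * κ ^ s := by
          rw [Finset.sum_const, nsmul_eq_mul]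
      _ ≤ ((s : ℝ) + 1) ^ p * κ ^ s :=
          mul_le_mul_of_nonneg_right hcard (pow_nonneg hκ0 _)
  -- squared bound
  have hsq : ∀ s : ℕ, ‖hSum p lam s‖ ^ 2 ≤ f s := by
    intro s
    calc ‖hSum p lam s‖ ^ 2 ≤ (((s : ℝ) + 1) ^ p * κ ^ s) ^ 2 :=
        pow_le_pow_left₀ (norm_nonneg _) (habs s) 2
      _ = f s := by rw [hf]; ring
  -- summability
  have hf_eq : ∀ j : ℕ, f j = ∑ i ∈ Finset.range (2 * p + 1),
      ((2 * p).choose i : ℝ) * ((j : ℝ) ^ i * (κ ^ 2) ^ j) := by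
    intro j
    rw [hf]
    show ((j : ℝ) + 1) ^ (2 * p) * κ ^ (2 * j) = _
    rw [add_pow, pow_mul, Finset.sum_mul]
    exact Finset.sum_congr rfl fun i _ => by ring
  have hsummable : Summable f := by
    refine Summable.congr ?_ (fun j => (hf_eq j).symm)
    refine summable_sum fun i _ => Summable.mul_left _ ?_
    exact summable_pow_mul_geometric_of_norm_lt_one i hr1
  have hfnonneg : ∀ s : ℕ, 0 ≤ f s := by
    intro s; rw [hf]; positivity
  -- upper bound by the tsum
  have hub : ∀ t : ℕ, sigmaSq p lam t ≤ ∑' j : ℕ, f j := by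
    intro t
    calc sigmaSq p lam t ≤ ∑ s ∈ Finset.range (t - p + 1), f s :=
        Finset.sum_le_sum fun s _ => hsq s
      _ ≤ ∑' j : ℕ, f j := Summable.sum_le_tsum _ (fun s _ => hfnonneg s) hsummable
  -- monotonicity
  have hmono : Monotone (fun t => sigmaSq p lam t) := by
    intro a b hab
    refine Finset.sum_le_sum_of_subset_of_nonneg
      (Finset.range_subset_range.mpr (by omega)) ?_
    intros; positivity
  -- lower bound 1
  have h1le : ∀ t : ℕ, 1 ≤ sigmaSq p lam t := by
    intro t
    have h0 : ‖hSum p lam 0‖ ^ 2 = 1 := by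
      simp [hSum, Finset.Nat.antidiagonalTuple_zero_right]
    rw [sigmaSq, ← h0]
    exact Finset.single_le_sum (f := fun s => ‖hSum p lam s‖ ^ 2)
      (fun s _ => by positivity) (Finset.mem_range.mpr (by omega))
  have hbdd : BddAbove (Set.range fun t => sigmaSq p lam t) := by
    refine ⟨∑' j : ℕ, f j, ?_⟩
    rintro x ⟨t, rfl⟩
    exact hub t
  refine ⟨fun t _ => ⟨h1le t, hmono (Nat.le_succ t), hub _⟩, hsummable, ?_⟩
  exact ⟨_, le_trans (h1le 0) (le_ciSup hbdd 0), tendsto_atTop_ciSup hmono hbdd⟩
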